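/- Let W(r) = (1 + r²/8)^{-1} and ΛW(r) = (1 - r²/8)(1 + r²/8)^{-2} (dimension D = 4). Then ∫₀^∞ [(r ∂_r ΛW)(r) + 2 ΛW(r)] · ΛW(r) · r³ dr = 32. -/

import Mathlib

open MeasureTheory Set

theorem stmt6 (ΛW : ℝ → ℝ)
    (hΛW : ∀ r : ℝ, ΛW r = (1 - r ^ 2 / 8) * ((1 + r ^ 2 / 8) ^ 2)⁻¹) :
    ∫ r in Set.Ioi (0 : ℝ), (r * deriv ΛW r + 2 * ΛW r) * ΛW r * r ^ 3 = 32 := by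
  obtain rfl : ΛW = fun r : ℝ => (1 - r ^ 2 / 8) * ((1 + r ^ 2 / 8) ^ 2)⁻¹ := funext hΛW
  set g : ℝ → ℝ := fun r : ℝ => (1 - r ^ 2 / 8) * ((1 + r ^ 2 / 8) ^ 2)⁻¹ with hgdef
  have hu : ∀ r : ℝ, (0:ℝ) < 1 + r ^ 2 / 8 := fun r => by positivity
  have hune : ∀ r : ℝ, (1 + r ^ 2 / 8) ≠ 0 := fun r => (hu r).ne'
  -- derivative of the inner function 1 + r^2/8
  have h0 : ∀ r : ℝ, HasDerivAt (fun r : ℝ => 1 + r ^ 2 / 8) (r / 4) r := by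
    intro r
    have := ((hasDerivAt_pow 2 r).div_const 8).const_add 1
    exact this.congr_deriv (by ring)
  have h2 : ∀ r : ℝ, HasDerivAt (fun r : ℝ => 1 - r ^ 2 / 8) (-(r / 4)) r := by
    intro r
    have := ((hasDerivAt_pow 2 r).div_const 8).const_sub 1
    exact this.congr_deriv (by ring)
  -- derivative of g
  have hg : ∀ r : ℝ, HasDerivAt g
      (r / 4 * (r ^ 2 / 8 - 3) * ((1 + r ^ 2 / 8) ^ 3)⁻¹) r := by
    intro r
    have hpow : HasDerivAt (fun r : ℝ => (1 + r ^ 2 / 8) ^ 2)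
        ((2 : ℕ) * (1 + r ^ 2 / 8) ^ 1 * (r / 4)) r := (h0 r).pow 2
    have hinv := hpow.inv (pow_ne_zero 2 (hune r))
    have := (h2 r).mul hinv
    refine this.congr_deriv ?_
    simp only [Pi.inv_apply]
    field_simp
    ring
  have hderiv : ∀ r : ℝ, deriv g r = r / 4 * (r ^ 2 / 8 - 3) * ((1 + r ^ 2 / 8) ^ 3)⁻¹ :=
    fun r => (hg r).deriv
  -- the antiderivative F
  set F : ℝ → ℝ := fun r => (1/2) * (r ^ 4 * (g r * g r)) with hFdef
  have hF : ∀ r : ℝ, HasDerivAt F ((r * deriv g r + 2 * g r) * g r * r ^ 3) r := by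
    intro r
    have := ((hasDerivAt_pow 4 r).mul ((hg r).mul (hg r))).const_mul (1/2 : ℝ)
    refine this.congr_deriv ?_
    rw [hderiv r]
    simp only [hgdef, Pi.mul_apply]
    push_cast
    field_simp
    ring
  -- simplified form of the integrand
  set φ : ℝ → ℝ := fun r => 2 * (1 - 3 * r ^ 2 / 8) * (1 - r ^ 2 / 8) * r ^ 3 *
      ((1 + r ^ 2 / 8) ^ 5)⁻¹ with hφdef
  have heq : ∀ r : ℝ, (r * deriv g r + 2 * g r) * g r * r ^ 3 = φ r := by
    intro r
    rw [hderiv r]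
    simp only [hgdef, hφdef]
    field_simp
    ring
  have hcontφ : Continuous φ := by
    apply Continuous.mul
    · fun_prop
    · exact (Continuous.pow (by fun_prop) 5).inv₀ fun r => pow_ne_zero 5 (hune r)
  -- integrability
  have hint : IntegrableOn (fun r => (r * deriv g r + 2 * g r) * g r * r ^ 3) (Ioi (0:ℝ)) := by
    rw [funext heq]
    have h1 : IntegrableOn φ (Ioc (0:ℝ) 1) := hcontφ.integrableOn_Ioc
    have h2 : IntegrableOn φ (Ioi (1:ℝ)) := by
      have hbase : IntegrableOn (fun t : ℝ => 3072 * t ^ (-3 : ℝ)) (Ioi (1:ℝ)) :=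
        (integrableOn_Ioi_rpow_of_lt (by norm_num) one_pos).const_mul 3072
      apply Integrable.mono' hbase (hcontφ.aestronglyMeasurable.restrict)
      filter_upwards [ae_restrict_mem measurableSet_Ioi] with r hr
      have hr1 : (1:ℝ) ≤ r := le_of_lt hr
      have hr0 : (0:ℝ) < r := lt_of_lt_of_le one_pos hr1
      have hrpow : r ^ (-3 : ℝ) = (r ^ 3)⁻¹ := by
        rw [Real.rpow_neg hr0.le, show (3:ℝ) = ((3:ℕ):ℝ) by norm_num, Real.rpow_natCast]
      have hu5 : (0:ℝ) < (1 + r ^ 2 / 8) ^ 5 := by positivity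
      have hr3 : (0:ℝ) < r ^ 3 := by positivity
      rw [hrpow, hφdef]
      simp only [Real.norm_eq_abs, ← div_eq_mul_inv]
      rw [abs_le]
      constructor
      · rw [← neg_div, div_le_div_iff₀ hr3 hu5]
        nlinarith [sq_nonneg r, sq_nonneg (r^2), sq_nonneg (r^3), sq_nonneg (r^4), sq_nonneg (r^5)]
      · rw [div_le_div_iff₀ hu5 hr3]
        nlinarith [sq_nonneg r, sq_nonneg (r^2), sq_nonneg (r^3), sq_nonneg (r^4), sq_nonneg (r^5)]
    have : Ioi (0:ℝ) = Ioc 0 1 ∪ Ioi 1 := (Set.Ioc_union_Ioi_eq_Ioi (by norm_num)).symm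
    rw [this]
    exact h1.union h2
  -- limit at infinity
  have hlim : Filter.Tendsto F Filter.atTop (nhds 32) := by
    set h : ℝ → ℝ := fun t => (1/2) * ((t ^ 2 - 1/8) * ((t ^ 2 + 1/8) ^ 2)⁻¹) ^ 2 with hhdef
    have hinv : Filter.Tendsto (fun r : ℝ => r⁻¹) Filter.atTop (nhds 0) :=
      tendsto_inv_atTop_zero
    have hc : ContinuousAt h 0 := by
      apply ContinuousAt.mul continuousAt_const
      apply ContinuousAt.pow
      apply ContinuousAt.mul (by fun_prop)
      exact ContinuousAt.inv₀ (by fun_prop) (by norm_num)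
    have hcomp : Filter.Tendsto (fun r : ℝ => h r⁻¹) Filter.atTop (nhds (h 0)) :=
      hc.tendsto.comp hinv
    have h0val : h 0 = 32 := by norm_num [hhdef]
    rw [h0val] at hcomp
    apply hcomp.congr'
    filter_upwards [Filter.eventually_ge_atTop (1:ℝ)] with r hr
    have hr0 : r ≠ 0 := by positivity
    have hrne : (r:ℝ)⁻¹ ^ 2 + 1/8 ≠ 0 := by positivity
    simp only [hhdef, hFdef, hgdef]
    field_simp
  -- continuity at 0
  have hcontF : ContinuousWithinAt F (Ici (0:ℝ)) 0 := by
    apply Continuous.continuousWithinAt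
    apply continuous_const.mul
    apply (continuous_pow 4).mul
    have hgc : Continuous g := by
      apply Continuous.mul
      · fun_prop
      · exact (Continuous.pow (by fun_prop) 2).inv₀ fun r => pow_ne_zero 2 (hune r)
    exact hgc.mul hgc
  have := integral_Ioi_of_hasDerivAt_of_tendsto hcontF (fun x _ => hF x) hint hlim
  rw [this]
  simp [hFdef]
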